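/- Let R be a commutative ring. (1) R has stable range at most 1 if and only if every upper triangular unimodular 2×2 matrix [[a,b],[0,d]] over R admits a simple extension whose (2,3) entry is -1, i.e., there exist f, s, t ∈ R such that the 3×3 matrix [[a,b,f],[0,d,-1],[-t,s,0]] has determinant 1. (2) R has stable range 1.5 if and only if every upper triangular unimodular 2×2 matrix [[a,b],[0,d]] over R with a ≠ 0 admits such a simple extension with (2,3) entry -1. (3) R has almost stable range 1 if and only if every upper triangular unimodular 2×2 matrix [[a,b],[0,d]] over R with a not in the Jacobson radical of R admits such a simple extension with (2,3) entry -1. -/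

import Mathlib

open Matrix

/-- A `2 × 2` matrix is unimodular if its four entries generate the unit ideal. -/
def Unimodular2 {R : Type*} [CommRing R] (A : Matrix (Fin 2) (Fin 2) R) : Prop :=
  Ideal.span {A 0 0, A 0 1, A 1 0, A 1 1} = ⊤

/-- `R` has stable range at most 1. -/
def StableRange1 (R : Type*) [CommRing R] : Prop :=
  ∀ a b : R, Ideal.span {a, b} = ⊤ → ∃ r : R, IsUnit (a + b * r)

/-- `R` has stable range 1.5. -/
def StableRange15 (R : Type*) [CommRing R] : Prop :=
  ∀ a b c : R, Ideal.span {a, b, c} = ⊤ → c ≠ 0 →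
    ∃ r : R, Ideal.span {a + b * r, c} = ⊤

/-- `R` has almost stable range 1. -/
def AlmostStableRange1 (R : Type*) [CommRing R] : Prop :=
  ∀ I : Ideal R, ¬ I ≤ Ideal.jacobson (⊥ : Ideal R) →
    ∀ a b : R ⧸ I, Ideal.span {a, b} = ⊤ → ∃ r : R ⧸ I, IsUnit (a + b * r)

/-- The upper triangular matrix `[[a,b],[0,d]]` admits a simple extension whose `(2,3)`
entry is `-1`. -/
def HasSimpleExtensionEntryNegOne {R : Type*} [CommRing R] (a b d : R) : Prop :=
  ∃ f s t : R, (!![a, b, f; 0, d, -1; -t, s, 0] : Matrix (Fin 3) (Fin 3) R).det = 1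

lemma span_pair_top_iff {R : Type*} [CommRing R] {a b : R} :
    Ideal.span {a, b} = ⊤ ↔ ∃ x y : R, x * a + y * b = 1 := by
  rw [Ideal.eq_top_iff_one, Ideal.mem_span_pair]

lemma span_triple_top_iff {R : Type*} [CommRing R] {a b c : R} :
    Ideal.span {a, b, c} = ⊤ ↔ ∃ x y z : R, x * a + y * b + z * c = 1 := by
  rw [Ideal.eq_top_iff_one, Ideal.mem_span_insert]
  constructor
  · rintro ⟨x, w, hw, h⟩
    rw [Ideal.mem_span_pair] at hw
    obtain ⟨y, z, rfl⟩ := hw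
    exact ⟨x, y, z, by linear_combination -h⟩
  · rintro ⟨x, y, z, h⟩
    exact ⟨x, y * b + z * c, Ideal.mem_span_pair.mpr ⟨y, z, rfl⟩, by linear_combination -h⟩

lemma unimod_iff {R : Type*} [CommRing R] {a b d : R} :
    Unimodular2 !![a, b; 0, d] ↔ ∃ x y z : R, x * a + y * b + z * d = 1 := by
  have hset : ({!![a, b; 0, d] 0 0, !![a, b; 0, d] 0 1, !![a, b; 0, d] 1 0,
      !![a, b; 0, d] 1 1} : Set R) = insert 0 {a, b, d} := by
    show ({a, b, 0, d} : Set R) = insert 0 {a, b, d}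
    ext x; simp; tauto
  rw [Unimodular2, hset,
    show Ideal.span (insert 0 ({a, b, d} : Set R)) = Ideal.span {a, b, d} from
      Submodule.span_insert_zero]
  exact span_triple_top_iff

lemma hse_iff {R : Type*} [CommRing R] {a b d : R} :
    HasSimpleExtensionEntryNegOne a b d ↔ ∃ f s t : R, a * s + (b + d * f) * t = 1 := by
  unfold HasSimpleExtensionEntryNegOne
  have key : ∀ f s t : R, (!![a, b, f; 0, d, -1; -t, s, 0] : Matrix (Fin 3) (Fin 3) R).det
      = a * s + (b + d * f) * t := by
    intro f s t
    simp [Matrix.det_fin_three]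
    ring
  constructor
  · rintro ⟨f, s, t, h⟩; exact ⟨f, s, t, by rw [← key f s t]; exact h⟩
  · rintro ⟨f, s, t, h⟩; exact ⟨f, s, t, by rw [key f s t]; exact h⟩

theorem stmt14 (R : Type*) [CommRing R] :
    (StableRange1 R ↔
      ∀ a b d : R, Unimodular2 !![a, b; 0, d] → HasSimpleExtensionEntryNegOne a b d) ∧
    (StableRange15 R ↔
      ∀ a b d : R, Unimodular2 !![a, b; 0, d] → a ≠ 0 → HasSimpleExtensionEntryNegOne a b d) ∧
    (AlmostStableRange1 R ↔
      ∀ a b d : R, Unimodular2 !![a, b; 0, d] → a ∉ Ideal.jacobson (⊥ : Ideal R) →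
        HasSimpleExtensionEntryNegOne a b d) := by
  refine ⟨⟨?_, ?_⟩, ⟨?_, ?_⟩, ⟨?_, ?_⟩⟩
  · -- SR1 → matrix condition
    intro h a b d hu
    obtain ⟨x, y, z, hxyz⟩ := unimod_iff.mp hu
    have hpair : Ideal.span (({b, z * d + x * a}) : Set R) = ⊤ :=
      span_pair_top_iff.mpr ⟨y, 1, by linear_combination hxyz⟩
    obtain ⟨r, hr⟩ := h b (z * d + x * a) hpair
    obtain ⟨v, hv⟩ := hr.exists_right_inv
    refine hse_iff.mpr ⟨z * r, x * r * v, v, ?_⟩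
    calc a * (x * r * v) + (b + d * (z * r)) * v
        = (b + (z * d + x * a) * r) * v := by ring
      _ = 1 := hv
  · -- matrix condition → SR1
    intro h a b hab
    have hu : Unimodular2 !![(0 : R), a; 0, b] := by
      refine unimod_iff.mpr ?_
      obtain ⟨x, y, hxy⟩ := span_pair_top_iff.mp hab
      exact ⟨0, x, y, by linear_combination hxy⟩
    obtain ⟨f, s, t, hfst⟩ := hse_iff.mp (h 0 a b hu)
    refine ⟨f, IsUnit.of_mul_eq_one t ?_⟩
    linear_combination hfst
  · -- SR15 → matrix condition
    intro h a b d hu ha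
    obtain ⟨x, y, z, hxyz⟩ := unimod_iff.mp hu
    have htr : Ideal.span ({b, d, a} : Set R) = ⊤ :=
      span_triple_top_iff.mpr ⟨y, z, x, by linear_combination hxyz⟩
    obtain ⟨r, hr⟩ := h b d a htr ha
    obtain ⟨u, v, huv⟩ := span_pair_top_iff.mp hr
    exact hse_iff.mpr ⟨r, v, u, by linear_combination huv⟩
  · -- matrix condition → SR15
    intro h a b c habc hc
    have hu : Unimodular2 !![c, a; 0, b] := by
      refine unimod_iff.mpr ?_
      obtain ⟨x, y, z, hxyz⟩ := span_triple_top_iff.mp habc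
      exact ⟨z, x, y, by linear_combination hxyz⟩
    obtain ⟨f, s, t, hfst⟩ := hse_iff.mp (h c a b hu hc)
    exact ⟨f, span_pair_top_iff.mpr ⟨t, s, by linear_combination hfst⟩⟩
  · -- ASR1 → matrix condition
    intro h a b d hu haJ
    obtain ⟨x, y, z, hxyz⟩ := unimod_iff.mp hu
    set I : Ideal R := Ideal.span {a} with hI
    have haI : a ∈ I := Ideal.subset_span (Set.mem_singleton a)
    have hInle : ¬ I ≤ Ideal.jacobson (⊥ : Ideal R) := fun hle => haJ (hle haI)
    set π : R →+* R ⧸ I := Ideal.Quotient.mk I with hπ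
    have hZa : π a = 0 := Ideal.Quotient.eq_zero_iff_mem.mpr haI
    have hpair : Ideal.span ({π b, π d} : Set (R ⧸ I)) = ⊤ := by
      refine span_pair_top_iff.mpr ⟨π y, π z, ?_⟩
      have h1 : π y * π b + π z * π d = π (y * b + z * d) := by
        rw [map_add, _root_.map_mul, _root_.map_mul]
      have h2 : y * b + z * d = 1 - x * a := by linear_combination hxyz
      rw [h1, h2, map_sub, _root_.map_one, _root_.map_mul, hZa, mul_zero, sub_zero]
    obtain ⟨rq, hrq⟩ := h I hInle (π b) (π d) hpair
    obtain ⟨f, rfl⟩ := Ideal.Quotient.mk_surjective rq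
    obtain ⟨vq, hvq⟩ := hrq.exists_right_inv
    obtain ⟨t, rfl⟩ := Ideal.Quotient.mk_surjective vq
    have hone : π ((b + d * f) * t) = 1 := by
      have : π ((b + d * f) * t) = (π b + π d * π f) * π t := by
        rw [_root_.map_mul, map_add, _root_.map_mul]
      rw [this]; exact hvq
    have hmem : 1 - (b + d * f) * t ∈ I := by
      rw [← Ideal.Quotient.eq_zero_iff_mem]
      show π (1 - (b + d * f) * t) = 0
      rw [map_sub, hone, _root_.map_one, sub_self]
    obtain ⟨s, hs⟩ := Ideal.mem_span_singleton'.mp hmem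
    exact hse_iff.mpr ⟨f, s, t, by linear_combination hs⟩
  · -- matrix condition → ASR1
    intro h I hInle xq yq hxy
    obtain ⟨a, haI, haJ⟩ := SetLike.not_le_iff_exists.mp hInle
    set π : R →+* R ⧸ I := Ideal.Quotient.mk I with hπ
    obtain ⟨b, rfl⟩ := Ideal.Quotient.mk_surjective xq
    obtain ⟨d, rfl⟩ := Ideal.Quotient.mk_surjective yq
    obtain ⟨uq, vq, huv⟩ := span_pair_top_iff.mp hxy
    obtain ⟨s₀, rfl⟩ := Ideal.Quotient.mk_surjective uq
    obtain ⟨t₀, rfl⟩ := Ideal.Quotient.mk_surjective vq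
    have hiI : 1 - s₀ * b - t₀ * d ∈ I := by
      rw [← Ideal.Quotient.eq_zero_iff_mem]
      show π (1 - s₀ * b - t₀ * d) = 0
      rw [map_sub, map_sub, _root_.map_one, _root_.map_mul, _root_.map_mul]
      rw [show (1 : R ⧸ I) - π s₀ * π b - π t₀ * π d
          = 1 - (π s₀ * π b + π t₀ * π d) from by ring, huv, sub_self]
    set i : R := 1 - s₀ * b - t₀ * d with hidef
    have key : ∃ e : R, e ∈ I ∧ e ∉ Ideal.jacobson (⊥ : Ideal R) ∧
        ∃ x y z : R, x * e + y * b + z * d = 1 := by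
      by_cases hiJ : i ∈ Ideal.jacobson (⊥ : Ideal R)
      · refine ⟨i + a * (1 - i), I.add_mem hiI (I.mul_mem_right _ haI), ?_, 1,
          s₀ - a * s₀, t₀ - a * t₀, by rw [hidef]; ring⟩
        intro heJ
        apply haJ
        have h1i : IsUnit (1 - i) := by
          have := Ideal.mem_jacobson_bot.mp hiJ (-1)
          have heq : i * (-1) + 1 = 1 - i := by ring
          rwa [heq] at this
        obtain ⟨v, hv⟩ := h1i.exists_right_inv
        have hsub : a * (1 - i) ∈ Ideal.jacobson (⊥ : Ideal R) := by
          have heq : a * (1 - i) = (i + a * (1 - i)) - i := by ring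
          rw [heq]
          exact Ideal.sub_mem _ heJ hiJ
        have haeq : a = a * (1 - i) * v := by rw [mul_assoc, hv, mul_one]
        rw [haeq]
        exact Ideal.mul_mem_right _ _ hsub
      · exact ⟨i, hiI, hiJ, 1, s₀, t₀, by rw [hidef]; ring⟩
    obtain ⟨e, heI, heJ, hx, hy, hz, hcomb⟩ := key
    have hu : Unimodular2 !![e, b; 0, d] := unimod_iff.mpr ⟨hx, hy, hz, hcomb⟩
    obtain ⟨f, s, t, hfst⟩ := hse_iff.mp (h e b d hu heJ)
    refine ⟨π f, IsUnit.of_mul_eq_one (π t) ?_⟩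
    have hZe : π e = 0 := Ideal.Quotient.eq_zero_iff_mem.mpr heI
    have hone : π (e * s + (b + d * f) * t) = 1 := by rw [hfst, _root_.map_one]
    calc (π b + π d * π f) * π t
        = π ((b + d * f) * t) := by
          rw [_root_.map_mul, map_add, _root_.map_mul]
      _ = π (e * s) + π ((b + d * f) * t) := by
          rw [_root_.map_mul π e s, hZe, zero_mul, zero_add]
      _ = π (e * s + (b + d * f) * t) := (map_add π _ _).symm
      _ = 1 := hone
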